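/- Suppose that for every λ ≥ 0 there is given a λ-regularized upper envelope φ^λ = (w^λ, b^λ), i.e., a feasible parameter minimizing J^λ over the set of feasible parameters. Then for every s ∈ S, V_{φ^λ}(s) → G* as λ → ∞ (limit along the filter atTop on λ ∈ ℝ). -/
import Mathlib


theorem stmt_0
    {W : Type*} [NormedAddCommGroup W] [NormedSpace ℝ W]
    {S : Type*}
    (f : W → S → ℝ)
    (hf_cont : ∀ s : S, Continuous fun w => f w s)
    (hf_zero : ∀ s : S, f 0 s = 0)
    (m : ℕ) (hm : 0 < m)
    (s : Fin m → S) (G : Fin m → ℝ)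
    (Gstar : ℝ)
    (hGstar : Gstar = Finset.univ.sup' ⟨⟨0, hm⟩, Finset.mem_univ _⟩ G)
    (φ : ℝ → W × ℝ)
    (hfeas : ∀ lam : ℝ, 0 ≤ lam → ∀ i : Fin m, G i ≤ f (φ lam).1 (s i) + (φ lam).2)
    (hmin : ∀ lam : ℝ, 0 ≤ lam → ∀ ψ : W × ℝ,
      (∀ i : Fin m, G i ≤ f ψ.1 (s i) + ψ.2) →
      (∑ i, (f (φ lam).1 (s i) + (φ lam).2 - G i) ^ 2) + lam * ‖(φ lam).1‖ ^ 2 ≤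
        (∑ i, (f ψ.1 (s i) + ψ.2 - G i) ^ 2) + lam * ‖ψ.1‖ ^ 2) :
    ∀ x : S,
      Filter.Tendsto (fun lam : ℝ => f (φ lam).1 x + (φ lam).2)
        Filter.atTop (nhds Gstar) := by
  obtain ⟨i0, -, hi0⟩ :=
    Finset.exists_mem_eq_sup' (⟨⟨0, hm⟩, Finset.mem_univ _⟩ : (Finset.univ : Finset (Fin m)).Nonempty) G
  have hGi0 : Gstar = G i0 := hGstar.trans hi0
  have hle : ∀ i, G i ≤ Gstar := fun i => hGstar ▸ Finset.le_sup' G (Finset.mem_univ i)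
  set H : ℝ := ∑ i, (Gstar - G i) ^ 2 with hH
  have hψ0 : ∀ i : Fin m, G i ≤ f (0 : W) (s i) + Gstar := by
    intro i; rw [hf_zero]; simpa using hle i
  have hwbound : ∀ lam : ℝ, 0 ≤ lam → lam * ‖(φ lam).1‖ ^ 2 ≤ H := by
    intro lam hlam
    have h := hmin lam hlam ((0 : W), Gstar) hψ0
    simp only [hf_zero, zero_add, norm_zero] at h
    have hs : (0:ℝ) ≤ ∑ i, (f (φ lam).1 (s i) + (φ lam).2 - G i) ^ 2 :=
      Finset.sum_nonneg fun i _ => sq_nonneg _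
    nlinarith [h, hs]
  -- w → 0
  have hw0 : Filter.Tendsto (fun lam => (φ lam).1) Filter.atTop (nhds 0) := by
    rw [tendsto_zero_iff_norm_tendsto_zero]
    have hsq : Filter.Tendsto (fun lam => ‖(φ lam).1‖ ^ 2) Filter.atTop (nhds 0) := by
      apply squeeze_zero' (Filter.Eventually.of_forall fun lam => sq_nonneg _)
        (g := fun lam => H / lam)
      · filter_upwards [Filter.eventually_gt_atTop (0 : ℝ)] with lam hlam
        rw [le_div_iff₀ hlam]
        have := hwbound lam hlam.le
        linarith [this]
      · exact Filter.Tendsto.div_atTop tendsto_const_nhds Filter.tendsto_id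
    have h2 := (Real.continuous_sqrt.tendsto 0).comp hsq
    simpa [Function.comp_def, Real.sqrt_sq (norm_nonneg _)] using h2
  have hfs : ∀ x : S, Filter.Tendsto (fun lam => f (φ lam).1 x) Filter.atTop (nhds 0) := by
    intro x
    have := ((hf_cont x).tendsto 0).comp hw0
    simpa [Function.comp_def, hf_zero x] using this
  set E : ℝ → ℝ := fun lam => ∑ i, |f (φ lam).1 (s i)| with hEdef
  have hE0 : Filter.Tendsto E Filter.atTop (nhds 0) := by
    have := tendsto_finset_sum (Finset.univ : Finset (Fin m))
      (fun i _ => (hfs (s i)).abs)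
    simpa using this
  have hEle : ∀ lam (i : Fin m), |f (φ lam).1 (s i)| ≤ E lam := fun lam i =>
    Finset.single_le_sum (f := fun i => |f (φ lam).1 (s i)|)
      (fun j _ => abs_nonneg _) (Finset.mem_univ i)
  have hub : ∀ lam : ℝ, 0 ≤ lam → (φ lam).2 ≤ Gstar + E lam := by
    intro lam hlam
    by_contra hb
    push_neg at hb
    have hfeas' : ∀ i : Fin m, G i ≤ f (φ lam).1 (s i) + (Gstar + E lam) := by
      intro i
      have h1 := (abs_le.mp (hEle lam i)).1
      linarith [hle i]
    have h := hmin lam hlam ((φ lam).1, Gstar + E lam) hfeas'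
    have hterm : ∀ i ∈ (Finset.univ : Finset (Fin m)),
        (f (φ lam).1 (s i) + (Gstar + E lam) - G i) ^ 2 ≤
        (f (φ lam).1 (s i) + (φ lam).2 - G i) ^ 2 := by
      intro i _
      have h1 := (abs_le.mp (hEle lam i)).1
      have h2 : 0 ≤ f (φ lam).1 (s i) + (Gstar + E lam) - G i := by linarith [hle i]
      nlinarith [hb]
    have hstrict : (f (φ lam).1 (s i0) + (Gstar + E lam) - G i0) ^ 2 <
        (f (φ lam).1 (s i0) + (φ lam).2 - G i0) ^ 2 := by
      have h1 := (abs_le.mp (hEle lam i0)).1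
      have h2 : 0 ≤ f (φ lam).1 (s i0) + (Gstar + E lam) - G i0 := by linarith [hle i0]
      nlinarith [hb]
    have hsum := Finset.sum_lt_sum hterm ⟨i0, Finset.mem_univ i0, hstrict⟩
    linarith [h, hsum]
  have hb : Filter.Tendsto (fun lam => (φ lam).2) Filter.atTop (nhds Gstar) := by
    have hlow : Filter.Tendsto (fun lam => Gstar - f (φ lam).1 (s i0))
        Filter.atTop (nhds Gstar) := by
      simpa using (tendsto_const_nhds (x := Gstar) (f := Filter.atTop)).sub (hfs (s i0))
    have hhigh : Filter.Tendsto (fun lam => Gstar + E lam) Filter.atTop (nhds Gstar) := by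
      simpa using (tendsto_const_nhds (x := Gstar) (f := Filter.atTop)).add hE0
    apply tendsto_of_tendsto_of_tendsto_of_le_of_le' hlow hhigh
    · filter_upwards [Filter.eventually_ge_atTop (0 : ℝ)] with lam hlam
      have := hfeas lam hlam i0
      rw [hGi0]
      linarith
    · filter_upwards [Filter.eventually_ge_atTop (0 : ℝ)] with lam hlam
      exact hub lam hlam
  intro x
  have := (hfs x).add hb
  simpa using this
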